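/- Let P be an n×n real row-stochastic matrix, P* the Cesàro limit of P^m, and H = (I − P + P*)⁻¹ (I − P*) the Drazin inverse of I − P. Then H satisfies: H (I − P) = (I − P) H = I − P*, and H P* = P* H = 0. -/

import Mathlib

open Finset Filter Topology Matrix

/-- A square real matrix is row-stochastic if all entries are nonnegative and
every row sums to 1. -/
def RowStochastic {n : ℕ} (P : Matrix (Fin n) (Fin n) ℝ) : Prop :=
  (∀ i j, 0 ≤ P i j) ∧ ∀ i, ∑ j, P i j = 1

lemma RowStochastic.mul {n : ℕ} {A B : Matrix (Fin n) (Fin n) ℝ}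
    (hA : RowStochastic A) (hB : RowStochastic B) : RowStochastic (A * B) := by
  constructor
  · intro i j
    rw [Matrix.mul_apply]
    exact Finset.sum_nonneg fun k _ => mul_nonneg (hA.1 i k) (hB.1 k j)
  · intro i
    simp only [Matrix.mul_apply]
    rw [Finset.sum_comm]
    simp_rw [← Finset.mul_sum, hB.2]
    simpa using hA.2 i

lemma RowStochastic.pow {n : ℕ} {P : Matrix (Fin n) (Fin n) ℝ}
    (hP : RowStochastic P) (m : ℕ) : RowStochastic (P ^ m) := by
  induction m with
  | zero =>
      refine ⟨fun i j => ?_, fun i => ?_⟩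
      · simp only [pow_zero, Matrix.one_apply]
        positivity
      · simp [pow_zero, Matrix.one_apply, Finset.sum_ite_eq]
  | succ k ih => rw [pow_succ]; exact ih.mul hP

lemma stoch_entry_le_one {n : ℕ} {P : Matrix (Fin n) (Fin n) ℝ}
    (hP : RowStochastic P) (i j : Fin n) : P i j ≤ 1 := by
  calc P i j ≤ ∑ k, P i k := Finset.single_le_sum (fun k _ => hP.1 i k) (Finset.mem_univ j)
  _ = 1 := hP.2 i

lemma tendsto_inv_smul_pow {n : ℕ} {P : Matrix (Fin n) (Fin n) ℝ}
    (hP : RowStochastic P) :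
    Tendsto (fun m : ℕ => (m : ℝ)⁻¹ • P ^ m) atTop (𝓝 0) := by
  refine tendsto_pi_nhds.mpr ?_
  intro i
  rw [tendsto_pi_nhds]
  intro j
  simp only [Matrix.smul_apply, smul_eq_mul, Matrix.zero_apply, Pi.zero_apply]
  have h0 : Tendsto (fun m : ℕ => (m : ℝ)⁻¹) atTop (𝓝 0) :=
    tendsto_inv_atTop_zero.comp tendsto_natCast_atTop_atTop
  apply squeeze_zero_norm _ h0
  intro m
  have hs := hP.pow m
  rw [Real.norm_eq_abs, abs_mul, abs_of_nonneg (hs.1 i j),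
    abs_of_nonneg (by positivity : (0:ℝ) ≤ (m:ℝ)⁻¹)]
  calc (m:ℝ)⁻¹ * (P ^ m) i j ≤ (m:ℝ)⁻¹ * 1 :=
        mul_le_mul_of_nonneg_left (stoch_entry_le_one hs i j) (by positivity)
  _ = (m:ℝ)⁻¹ := mul_one _

lemma tendsto_inv_smul_const {n : ℕ} (B : Matrix (Fin n) (Fin n) ℝ) :
    Tendsto (fun m : ℕ => (m : ℝ)⁻¹ • B) atTop (𝓝 0) := by
  refine tendsto_pi_nhds.mpr ?_
  intro i
  rw [tendsto_pi_nhds]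
  intro j
  simp only [Matrix.smul_apply, smul_eq_mul, Matrix.zero_apply, Pi.zero_apply]
  have h0 : Tendsto (fun m : ℕ => (m : ℝ)⁻¹) atTop (𝓝 0) :=
    tendsto_inv_atTop_zero.comp tendsto_natCast_atTop_atTop
  simpa using h0.mul_const (B i j)

lemma sum_mulVec' {n : ℕ} {ι : Type*} (s : Finset ι)
    (f : ι → Matrix (Fin n) (Fin n) ℝ) (x : Fin n → ℝ) :
    (∑ k ∈ s, f k) *ᵥ x = ∑ k ∈ s, (f k *ᵥ x) := by
  classical
  induction s using Finset.induction with
  | empty => simp [Matrix.zero_mulVec]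
  | insert _ _ h ih => simp [Finset.sum_insert h, Matrix.add_mulVec, ih]

/-- properties of the Drazin inverse `H = (I - P + Pstar)⁻¹ (I - Pstar)`
of `I - P`: `H (I - P) = (I - P) H = I - Pstar` and `H Pstar = Pstar H = 0`. -/
theorem drazin_inverse_properties {n : ℕ} (P : Matrix (Fin n) (Fin n) ℝ)
    (hP : RowStochastic P) (Pstar : Matrix (Fin n) (Fin n) ℝ)
    (hPstar : Tendsto (fun m : ℕ => (m : ℝ)⁻¹ • ∑ k ∈ Finset.range m, P ^ k)
      atTop (𝓝 Pstar))
    (H : Matrix (Fin n) (Fin n) ℝ)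
    (hH : H = (1 - P + Pstar)⁻¹ * (1 - Pstar)) :
    H * (1 - P) = 1 - Pstar ∧ (1 - P) * H = 1 - Pstar ∧
      H * Pstar = 0 ∧ Pstar * H = 0 := by
  set A : ℕ → Matrix (Fin n) (Fin n) ℝ :=
    fun m => (m : ℝ)⁻¹ • ∑ k ∈ Finset.range m, P ^ k with hA
  -- the key shift identity
  have hshift : ∀ m : ℕ, P * A m = A m + (m : ℝ)⁻¹ • (P ^ m - 1) := by
    intro m
    simp only [hA, Matrix.mul_smul, Finset.mul_sum]
    rw [← smul_add]
    congr 1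
    have : ∀ k ∈ Finset.range m, P * P ^ k = P ^ (k + 1) := fun k _ => (pow_succ' P k).symm
    rw [Finset.sum_congr rfl this]
    have key := Finset.sum_range_succ' (fun k => P ^ k) m
    rw [Finset.sum_range_succ] at key
    simp only [pow_zero] at key
    have h2 : ∑ x ∈ Finset.range m, P ^ (x + 1)
        = (∑ k ∈ Finset.range m, P ^ k + P ^ m) - 1 := by rw [key]; abel
    rw [h2]; abel
  -- the remainder tends to zero
  have hrem : Tendsto (fun m : ℕ => (m : ℝ)⁻¹ • (P ^ m - 1)) atTop (𝓝 0) := by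
    have := (tendsto_inv_smul_pow hP).sub (tendsto_inv_smul_const
      (1 : Matrix (Fin n) (Fin n) ℝ))
    simpa [smul_sub] using this
  -- P * Pstar = Pstar
  have hPA : Tendsto (fun m => P * A m) atTop (𝓝 Pstar) := by
    simp only [hshift]
    simpa using hPstar.add hrem
  have hPA' : Tendsto (fun m => P * A m) atTop (𝓝 (P * Pstar)) :=
    ((continuous_const.matrix_mul continuous_id).tendsto Pstar).comp hPstar
  have hPP : P * Pstar = Pstar := tendsto_nhds_unique hPA' hPA
  -- Pstar * P = Pstar
  have hcomm : ∀ m : ℕ, A m * P = P * A m := by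
    intro m
    simp only [hA, Matrix.smul_mul, Matrix.mul_smul, Finset.sum_mul, Finset.mul_sum]
    congr 1
    exact Finset.sum_congr rfl fun k _ => by rw [← pow_succ, ← pow_succ']
  have hAP2 : Tendsto (fun m => A m * P) atTop (𝓝 (Pstar * P)) :=
    ((continuous_id.matrix_mul continuous_const).tendsto Pstar).comp hPstar
  have hSP : Pstar * P = Pstar :=
    tendsto_nhds_unique hAP2 (by simpa only [hcomm] using hPA)
  -- P^k * Pstar = Pstar
  have hpowS : ∀ k : ℕ, P ^ k * Pstar = Pstar := by
    intro k
    induction k with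
    | zero => simp
    | succ k ih => rw [pow_succ', mul_assoc, ih, hPP]
  -- Pstar is idempotent
  have hSS : Pstar * Pstar = Pstar := by
    have h1 : Tendsto (fun m => A m * Pstar) atTop (𝓝 (Pstar * Pstar)) :=
      ((continuous_id.matrix_mul continuous_const).tendsto Pstar).comp hPstar
    have h2 : Tendsto (fun m => A m * Pstar) atTop (𝓝 Pstar) := by
      apply Tendsto.congr' _ (tendsto_const_nhds (x := Pstar))
      filter_upwards [eventually_ge_atTop 1] with m hm
      simp only [hA, Matrix.smul_mul, Finset.sum_mul]
      rw [Finset.sum_congr rfl (fun k _ => hpowS k), Finset.sum_const, Finset.card_range,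
        ← Nat.cast_smul_eq_nsmul ℝ, smul_smul,
        inv_mul_cancel₀ (by exact_mod_cast Nat.one_le_iff_ne_zero.mp hm), one_smul]
    exact tendsto_nhds_unique h1 h2
  set Q : Matrix (Fin n) (Fin n) ℝ := 1 - P + Pstar with hQdef
  have hQS : Pstar * Q = Pstar := by
    rw [hQdef, mul_add, mul_sub, mul_one, hSP, hSS]; abel
  have hQS' : Q * Pstar = Pstar := by
    rw [hQdef, add_mul, sub_mul, one_mul, hPP, hSS]; abel
  -- Q is invertible
  have hQunit : IsUnit Q := by
    rw [← Matrix.mulVec_injective_iff_isUnit]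
    have hker : ∀ x : Fin n → ℝ, Q *ᵥ x = 0 → x = 0 := by
      intro x hx
      have hs : Pstar *ᵥ x = 0 := by
        have h := congrArg (fun v => Pstar *ᵥ v) hx
        simp only [Matrix.mulVec_mulVec, Matrix.mulVec_zero] at h
        rwa [hQS] at h
      have hfix : P *ᵥ x = x := by
        have h := hx
        rw [hQdef, Matrix.add_mulVec, Matrix.sub_mulVec, Matrix.one_mulVec, hs, add_zero,
          sub_eq_zero] at h
        exact h.symm
      have hpow : ∀ k : ℕ, (P ^ k) *ᵥ x = x := by
        intro k
        induction k with
        | zero => simp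
        | succ k ih => rw [pow_succ', ← Matrix.mulVec_mulVec, ih, hfix]
      have h1 : Tendsto (fun m => A m *ᵥ x) atTop (𝓝 (Pstar *ᵥ x)) :=
        ((continuous_id.matrix_mulVec continuous_const).tendsto Pstar).comp hPstar
      have h2 : Tendsto (fun m => A m *ᵥ x) atTop (𝓝 x) := by
        apply Tendsto.congr' _ (tendsto_const_nhds (x := x))
        filter_upwards [eventually_ge_atTop 1] with m hm
        simp only [hA, Matrix.smul_mulVec, sum_mulVec']
        rw [Finset.sum_congr rfl (fun k _ => hpow k), Finset.sum_const, Finset.card_range,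
          ← Nat.cast_smul_eq_nsmul ℝ, smul_smul,
          inv_mul_cancel₀ (by exact_mod_cast Nat.one_le_iff_ne_zero.mp hm), one_smul]
      have : Pstar *ᵥ x = x := tendsto_nhds_unique h1 h2
      rw [hs] at this
      exact this.symm
    intro x y hxy
    have : Q *ᵥ (x - y) = 0 := by rw [Matrix.mulVec_sub, hxy, sub_self]
    exact sub_eq_zero.mp (hker _ this)
  have hdet : IsUnit Q.det := (Matrix.isUnit_iff_isUnit_det _).mp hQunit
  have hQl : Q⁻¹ * Q = 1 := Matrix.nonsing_inv_mul _ hdet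
  have hQr : Q * Q⁻¹ = 1 := Matrix.mul_nonsing_inv _ hdet
  have e1 : Q * (1 - Pstar) = 1 - P := by
    rw [mul_sub, mul_one, hQS', hQdef]; abel
  have e2 : (1 - Pstar) * (1 - P) = 1 - P := by
    rw [sub_mul, one_mul, mul_sub, mul_one, hSP]; abel
  have e3 : (1 - P) * (1 - Pstar) = 1 - P := by
    rw [mul_sub, mul_one, sub_mul, one_mul, hPP]; abel
  have hc : P * Q = Q * P := by
    rw [hQdef, mul_add, mul_sub, mul_one, add_mul, sub_mul, one_mul, hPP, hSP]
  have hcommQ : (1 - P) * Q = Q * (1 - P) := by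
    rw [sub_mul, one_mul, mul_sub, mul_one, hc]
  have hcommInv : (1 - P) * Q⁻¹ = Q⁻¹ * (1 - P) := by
    have haux : Q * ((1 - P) * Q⁻¹) = 1 - P := by
      rw [← mul_assoc, ← hcommQ, mul_assoc, hQr, mul_one]
    calc (1 - P) * Q⁻¹ = (Q⁻¹ * Q) * ((1 - P) * Q⁻¹) := by rw [hQl, one_mul]
    _ = Q⁻¹ * (Q * ((1 - P) * Q⁻¹)) := by rw [mul_assoc]
    _ = Q⁻¹ * (1 - P) := by rw [haux]
  have hQinv1P : Q⁻¹ * (1 - P) = 1 - Pstar := by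
    rw [← e1, ← mul_assoc, hQl, one_mul]
  have hSQinv : Pstar * Q⁻¹ = Pstar := by
    calc Pstar * Q⁻¹ = (Pstar * Q) * Q⁻¹ := by rw [hQS]
    _ = Pstar * (Q * Q⁻¹) := mul_assoc _ _ _
    _ = Pstar := by rw [hQr, mul_one]
  refine ⟨?_, ?_, ?_, ?_⟩
  · rw [hH, mul_assoc, e2, hQinv1P]
  · rw [hH, ← mul_assoc, hcommInv, mul_assoc, e3, hQinv1P]
  · rw [hH, mul_assoc, sub_mul, one_mul, hSS, sub_self, mul_zero]
  · rw [hH, ← mul_assoc, hSQinv, mul_sub, mul_one, hSS, sub_self]
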